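/- Let K be a field of characteristic 0, let P ∈ K[x,y] with deg_x P ≤ d_x and deg_y P = d_y ≥ 1, and let a ∈ K[x] be the leading coefficient of P with respect to y. Let α_1(x), …, α_{d_y}(x) be the roots of P (counted with multiplicity) in an algebraic closure of K(x), let c be an integer with 1 ≤ c ≤ d_y, let D = C(d_y, c) (the binomial coefficient), and let Σ_c P = Π_{i_1 < ⋯ < i_c} (y − (α_{i_1} + ⋯ + α_{i_c})) ∈ K(x)[y]. Then a^D · Σ_c P is a polynomial in K[x,y] of bidegree at most (d_x·D, D), and it vanishes at y = α_{i_1} + ⋯ + α_{i_c} for every choice of indices i_1 < ⋯ < i_c. -/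

import Mathlib

open Polynomial

/-- `deg_x` of a bivariate polynomial in `K[x][y]` (inner variable `x`). -/
noncomputable def degX {K : Type*} [Field K] (P : Polynomial (Polynomial K)) : ℕ :=
  P.support.sup fun j => (P.coeff j).natDegree

/-- An algebraic closure of `K(x)`. -/
abbrev AlgClos (K : Type*) [Field K] : Type _ := AlgebraicClosure (RatFunc K)

/-- The canonical map `K[x] → L`, `L` an algebraic closure of `K(x)`. -/
noncomputable def ρ (K : Type*) [Field K] : Polynomial K →+* AlgClos K :=
  (algebraMap (RatFunc K) (AlgClos K)).comp (algebraMap (Polynomial K) (RatFunc K))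

/-- Valuation-ring bound for roots of monic polynomials. -/
lemma pcs_root_bound {L : Type*} [Field L] (B : ValuationSubring L) (t ξ : L) (ht : t ≠ 0)
    (n : ℕ) (c : ℕ → L) (hc : ∀ j < n, c j / t ^ (n - j) ∈ B)
    (heq : ξ ^ n + ∑ j ∈ Finset.range n, c j * ξ ^ j = 0) : ξ / t ∈ B := by
  by_cases hξ : ξ = 0
  · simpa [hξ] using B.zero_mem
  rcases B.mem_or_inv_mem (ξ / t) with h | h
  · exact h
  rw [inv_div] at h
  set s : L := -∑ j ∈ Finset.range n, c j / t ^ (n - j) * (t / ξ) ^ (n - j - 1) with hs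
  have hsB : s ∈ B :=
    neg_mem (sum_mem fun j hj => mul_mem (hc j (Finset.mem_range.mp hj)) (pow_mem h _))
  have hmul : (t / ξ) * s = 1 := by
    have h2 : ∑ j ∈ Finset.range n, c j * ξ ^ j = -ξ ^ n := by linear_combination heq
    rw [hs, mul_neg, Finset.mul_sum]
    have hterm : ∀ j ∈ Finset.range n,
        t / ξ * (c j / t ^ (n - j) * (t / ξ) ^ (n - j - 1)) = c j * ξ ^ j / ξ ^ n := by
      intro j hj
      rw [Finset.mem_range] at hj
      have h1 : n - j - 1 + 1 = n - j := by omega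
      have h2 : (n - j) + j = n := by omega
      rw [← mul_assoc, mul_comm (t/ξ), mul_assoc, ← pow_succ', h1, div_pow, div_mul_div_comm]
      rw [div_eq_div_iff (mul_ne_zero (pow_ne_zero _ ht) (pow_ne_zero _ hξ)) (pow_ne_zero _ hξ)]
      ring_nf
      rw [mul_assoc (c j * t ^ (n - j)) (ξ ^ (n - j)) (ξ ^ j), ← pow_add, h2]
    rw [Finset.sum_congr rfl hterm, ← Finset.sum_div, h2, neg_div, neg_neg,
      div_self (pow_ne_zero _ hξ)]
  have hfin : ξ / t = s := by
    rw [show ξ / t = (t / ξ)⁻¹ from (inv_div t ξ).symm]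
    exact inv_eq_of_mul_eq_one_right hmul
  rw [hfin]; exact hsB

lemma pcs_symm_mem {R : Type*} [CommRing R] {n : ℕ} (W : MvPolynomial (Fin n) R)
    (hW : W.IsSymmetric) :
    W ∈ Algebra.adjoin R (Set.range fun i : Fin n => MvPolynomial.esymm (Fin n) R (i + 1)) := by
  obtain ⟨p, hp⟩ := MvPolynomial.esymmAlgHom_surjective (σ := Fin n) (n := n) R
    (le_of_eq (Fintype.card_fin n)) ⟨W, hW⟩
  have h : W = MvPolynomial.aeval (fun i : Fin n => MvPolynomial.esymm (Fin n) R (i + 1)) p := by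
    rw [← MvPolynomial.esymmAlgHom_apply, hp]
  rw [h, Algebra.adjoin_range_eq_range_aeval]
  exact ⟨p, rfl⟩

/-- coefficients of the universal composed-sum product are symmetric. -/
lemma pcs_coeff_symm (R : Type*) [CommRing R] (n c k : ℕ) :
    (Polynomial.coeff (∏ s ∈ Finset.powersetCard c (Finset.univ : Finset (Fin n)),
      (Polynomial.X - Polynomial.C (∑ i ∈ s, (MvPolynomial.X i : MvPolynomial (Fin n) R)))) k).IsSymmetric := by
  intro e
  have hcoeff : ∀ (p : Polynomial (MvPolynomial (Fin n) R)),
      MvPolynomial.rename e (p.coeff k) = (p.map (MvPolynomial.rename e).toRingHom).coeff k := by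
    intro p; rw [Polynomial.coeff_map]; rfl
  rw [hcoeff]
  congr 1
  rw [Polynomial.map_prod]
  have himg : Finset.image (fun s : Finset (Fin n) => s.image e)
      (Finset.powersetCard c (Finset.univ : Finset (Fin n))) = Finset.powersetCard c Finset.univ := by
    ext t
    simp only [Finset.mem_image, Finset.mem_powersetCard_univ]
    constructor
    · rintro ⟨s, hs, rfl⟩
      rw [Finset.card_image_of_injective _ e.injective]; exact hs
    · intro ht
      refine ⟨t.image e.symm, ?_, ?_⟩
      · rw [Finset.card_image_of_injective _ e.symm.injective]; exact ht
      · simp [Finset.image_image, Function.comp_def]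
  calc ∏ s ∈ Finset.powersetCard c (Finset.univ : Finset (Fin n)),
        Polynomial.map (MvPolynomial.rename e).toRingHom
          (Polynomial.X - Polynomial.C (∑ i ∈ s, MvPolynomial.X i))
      = ∏ s ∈ Finset.powersetCard c (Finset.univ : Finset (Fin n)),
        (Polynomial.X - Polynomial.C (∑ i ∈ s.image e, (MvPolynomial.X i : MvPolynomial (Fin n) R))) := by
        refine Finset.prod_congr rfl fun s _ => ?_
        rw [Polynomial.map_sub, Polynomial.map_X, Polynomial.map_C]
        congr 1
        rw [Finset.sum_image (fun x _ y _ h => e.injective h)]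
        simp [map_sum]
    _ = ∏ t ∈ Finset.image (fun s : Finset (Fin n) => s.image e)
          (Finset.powersetCard c (Finset.univ : Finset (Fin n))),
        (Polynomial.X - Polynomial.C (∑ i ∈ t, (MvPolynomial.X i : MvPolynomial (Fin n) R))) := by
        rw [Finset.prod_image]
        intro s hs t ht h
        have := congrArg (Finset.image e.symm) h
        simpa [Finset.image_image, Function.comp_def] using this
    _ = _ := by rw [himg]

/-- If the elementary symmetric functions of `α` (equivalently, the coefficients of
`∏ (X - C (α i))`) lie in the image of `F`, then so do the coefficients of the composed-sum
polynomial. -/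
lemma pcs_coeff_mem_bot {F L : Type*} [Field F] [Field L] [Algebra F L] {n : ℕ} (cc : ℕ)
    (α : Fin n → L)
    (hcoef : ∀ j : ℕ, (∏ i : Fin n, (X - C (α i))).coeff j ∈ (⊥ : Subalgebra F L)) (k : ℕ) :
    (∏ s ∈ Finset.powersetCard cc (Finset.univ : Finset (Fin n)),
      (X - C (∑ i ∈ s, α i))).coeff k ∈ (⊥ : Subalgebra F L) := by
  classical
  -- elementary symmetric functions of α lie in ⊥
  have hesymm : ∀ j : ℕ, MvPolynomial.aeval α (MvPolynomial.esymm (Fin n) F j) ∈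
      (⊥ : Subalgebra F L) := by
    intro j
    have haev : MvPolynomial.aeval α (MvPolynomial.esymm (Fin n) F j) =
        ∑ t ∈ Finset.powersetCard j (Finset.univ : Finset (Fin n)), ∏ i ∈ t, α i := by
      rw [MvPolynomial.esymm, map_sum]
      exact Finset.sum_congr rfl fun t _ => by rw [map_prod]; simp
    rw [haev]
    by_cases hj : j ≤ n
    · have hv := Finset.prod_X_add_C_coeff (Finset.univ : Finset (Fin n))
        (fun i => -α i) (k := n - j) (by simpa using Nat.sub_le n j)
      rw [Finset.card_univ, Fintype.card_fin, Nat.sub_sub_self hj] at hv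
      have hsub : ∀ i : Fin n, (X + C (-α i)) = X - C (α i) := by
        intro i; rw [map_neg, ← sub_eq_add_neg]
      simp_rw [hsub] at hv
      have hsum : ∑ t ∈ Finset.powersetCard j (Finset.univ : Finset (Fin n)), ∏ i ∈ t, α i =
          (-1 : L) ^ j * ∑ t ∈ Finset.powersetCard j (Finset.univ : Finset (Fin n)),
            ∏ i ∈ t, (-α i) := by
        rw [Finset.mul_sum]
        refine Finset.sum_congr rfl fun t ht => ?_
        rw [Finset.mem_powersetCard_univ] at ht
        have hneg : ∏ i ∈ t, (-α i) = (-1 : L) ^ j * ∏ i ∈ t, α i := by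
          simp_rw [neg_eq_neg_one_mul (α _)]
          rw [Finset.prod_mul_distrib, Finset.prod_const, ht]
        rw [hneg, ← mul_assoc, ← mul_pow]
        norm_num
      rw [hsum, ← hv]
      exact mul_mem (pow_mem (neg_mem (one_mem _)) j) (hcoef (n - j))
    · rw [Finset.powersetCard_eq_empty.mpr (by simp; omega), Finset.sum_empty]
      exact zero_mem _
  have hQ : (∏ s ∈ Finset.powersetCard cc (Finset.univ : Finset (Fin n)),
      (X - C (∑ i ∈ s, α i))) =
      Polynomial.map (MvPolynomial.aeval α : MvPolynomial (Fin n) F →ₐ[F] L).toRingHom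
        (∏ s ∈ Finset.powersetCard cc (Finset.univ : Finset (Fin n)),
          (X - C (∑ i ∈ s, MvPolynomial.X i))) := by
    rw [Polynomial.map_prod]
    refine Finset.prod_congr rfl fun s _ => ?_
    rw [Polynomial.map_sub, Polynomial.map_X, Polynomial.map_C]
    congr 1
    simp [map_sum]
  rw [hQ, Polynomial.coeff_map]
  have hWmem := pcs_symm_mem _ (pcs_coeff_symm F n cc k)
  have hmem2 : (MvPolynomial.aeval α : MvPolynomial (Fin n) F →ₐ[F] L)
      ((∏ s ∈ Finset.powersetCard cc (Finset.univ : Finset (Fin n)),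
        (X - C (∑ i ∈ s, (MvPolynomial.X i : MvPolynomial (Fin n) F)))).coeff k) ∈
      Subalgebra.map (MvPolynomial.aeval α : MvPolynomial (Fin n) F →ₐ[F] L)
        (Algebra.adjoin F (Set.range fun i : Fin n => MvPolynomial.esymm (Fin n) F (i + 1))) :=
    ⟨_, hWmem, rfl⟩
  rw [AlgHom.map_adjoin] at hmem2
  refine Algebra.adjoin_le ?_ hmem2
  rintro x ⟨y, ⟨i, rfl⟩, rfl⟩
  exact hesymm (i + 1)

section PCS

variable {K : Type*} [Field K]

lemma pcs_intDegree_Xpow (N : ℕ) : (RatFunc.X ^ N : RatFunc K).intDegree = N := by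
  rw [show (RatFunc.X ^ N : RatFunc K) = algebraMap (Polynomial K) (RatFunc K) (X ^ N) by
    rw [map_pow, RatFunc.algebraMap_X], RatFunc.intDegree_polynomial, natDegree_X_pow]

lemma pcs_intDegree_div (q : Polynomial K) (N : ℕ) (hq : q ≠ 0) :
    (algebraMap (Polynomial K) (RatFunc K) q / RatFunc.X ^ N).intDegree = q.natDegree - (N : ℤ) := by
  have hX : (RatFunc.X : RatFunc K) ^ N ≠ 0 := pow_ne_zero _ RatFunc.X_ne_zero
  have hq' : algebraMap (Polynomial K) (RatFunc K) q ≠ 0 := by simpa using hq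
  have hf : algebraMap (Polynomial K) (RatFunc K) q / RatFunc.X ^ N ≠ 0 := div_ne_zero hq' hX
  have := RatFunc.intDegree_mul hf hX
  rw [div_mul_cancel₀ _ hX, RatFunc.intDegree_polynomial, pcs_intDegree_Xpow] at this
  omega

lemma pcs_exists_B :
    ∃ B : ValuationSubring (AlgebraicClosure (RatFunc K)),
      (∀ (q : Polynomial K) (N : ℕ), q.natDegree ≤ N → ρ K q / (ρ K X) ^ N ∈ B) ∧
      (∀ (q : Polynomial K) (N : ℕ), ρ K q / (ρ K X) ^ N ∈ B → q.natDegree ≤ N) := by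
  classical
  set F := RatFunc K
  set L := AlgebraicClosure (RatFunc K)
  set φ : F →+* L := algebraMap F L with hφ
  have hφinj : Function.Injective φ := φ.injective
  set v := FunctionField.inftyValuation K with hv
  set V : ValuationSubring F := v.valuationSubring with hV
  set A : LocalSubring L := (ValuationSubring.toLocalSubring V).map φ with hA
  obtain ⟨B, hle, hloc⟩ := A.exists_le_valuationSubring
  have hXmap : φ RatFunc.X = ρ K X := by
    rw [show (RatFunc.X : F) = algebraMap (Polynomial K) F X from (RatFunc.algebraMap_X).symm]
    rfl
  have hqmap : ∀ q : Polynomial K, φ (algebraMap (Polynomial K) F q) = ρ K q := fun q => rfl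
  have hmemA : ∀ f : F, v f ≤ 1 → φ f ∈ A.toSubring := fun f hf => ⟨f, hf, rfl⟩
  refine ⟨B, ?_, ?_⟩
  · intro q N hdeg
    have hfV : v (algebraMap (Polynomial K) F q / RatFunc.X ^ N) ≤ 1 := by
      by_cases hq : q = 0
      · simp [hq]
      have hf : algebraMap (Polynomial K) F q / RatFunc.X ^ N ≠ 0 :=
        div_ne_zero (by simpa using hq) (pow_ne_zero _ RatFunc.X_ne_zero)
      rw [hv, FunctionField.inftyValuation, RatFunc.inftyValuation_apply,
        RatFunc.inftyValuation_of_nonzero K hf, pcs_intDegree_div q N hq]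
      rw [← WithZero.exp_zero, WithZero.exp_le_exp]
      omega
    have := hle (hmemA _ hfV)
    rwa [map_div₀, map_pow, hXmap, hqmap] at this
  · intro q N hmem
    by_contra hdeg
    push_neg at hdeg
    have hq : q ≠ 0 := by rintro rfl; simp at hdeg
    have hq' : algebraMap (Polynomial K) F q ≠ 0 := by simpa using hq
    have hXN : (RatFunc.X : F) ^ N ≠ 0 := pow_ne_zero _ RatFunc.X_ne_zero
    set g : F := RatFunc.X ^ N / algebraMap (Polynomial K) F q with hg
    have hg0 : g ≠ 0 := div_ne_zero hXN hq'
    have hgint : g.intDegree = N - (q.natDegree : ℤ) := by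
      have h3 := RatFunc.intDegree_mul hg0 hq'
      have h4 : g * algebraMap (Polynomial K) F q = RatFunc.X ^ N := by
        rw [hg]; exact div_mul_cancel₀ _ hq'
      rw [h4, pcs_intDegree_Xpow, RatFunc.intDegree_polynomial] at h3
      omega
    have hvg : v g < 1 := by
      rw [hv, FunctionField.inftyValuation, RatFunc.inftyValuation_apply,
        RatFunc.inftyValuation_of_nonzero K hg0, hgint, ← WithZero.exp_zero, WithZero.exp_lt_exp]
      omega
    have hmemAg : φ g ∈ A.toSubring := hmemA g hvg.le
    -- φ g is a unit in B
    have hprod : φ g * (ρ K q / (ρ K X) ^ N) = 1 := by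
      rw [← hqmap, ← hXmap, ← map_pow, ← map_div₀, ← map_mul, hg]
      rw [div_mul_div_comm, mul_comm, div_self (mul_ne_zero hq' hXN), map_one]
    have hunitB : IsUnit (Subring.inclusion hle ⟨φ g, hmemAg⟩) := by
      refine isUnit_iff_exists_inv.mpr ⟨⟨ρ K q / (ρ K X) ^ N, hmem⟩, ?_⟩
      exact Subtype.ext hprod
    have hunitA : IsUnit (⟨φ g, hmemAg⟩ : A.toSubring) := hloc.map_nonunit _ hunitB
    obtain ⟨⟨w, hw⟩, hw1⟩ := isUnit_iff_exists_inv.mp hunitA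
    obtain ⟨f', hf'V, rfl⟩ := hw
    have : φ (g * f') = 1 := by
      rw [map_mul]; exact congrArg Subtype.val hw1
    have hgf : g * f' = 1 := hφinj (by rw [this, map_one])
    have : (1 : WithZero (Multiplicative ℤ)) = v g * v f' := by
      rw [← Valuation.map_mul, hgf, Valuation.map_one]
    have hcon : v g * v f' ≤ v g * 1 := mul_le_mul_right hf'V (v g)
    rw [mul_one] at hcon
    exact absurd (this ▸ hcon) (not_le.mpr hvg)

end PCS

set_option maxHeartbeats 1000000 in
theorem pure_composed_sum (K : Type*) [Field K] [CharZero K]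
    (P : Polynomial (Polynomial K)) (dx dy c D : ℕ)
    (hdx : degX P ≤ dx) (hdy : P.natDegree = dy) (hdy1 : 1 ≤ dy)
    (hc1 : 1 ≤ c) (hcd : c ≤ dy) (hD : D = Nat.choose dy c)
    (α : Fin dy → AlgClos K)
    (hroots : P.map (ρ K) =
      C (ρ K P.leadingCoeff) * ∏ i : Fin dy, (X - C (α i))) :
    ∃ A : Polynomial (Polynomial K),
      degX A ≤ dx * D ∧ A.natDegree ≤ D ∧
      A.map (ρ K) = C (ρ K P.leadingCoeff) ^ D *
        ∏ s ∈ Finset.powersetCard c (Finset.univ : Finset (Fin dy)),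
          (X - C (∑ i ∈ s, α i)) ∧
      ∀ s ∈ Finset.powersetCard c (Finset.univ : Finset (Fin dy)),
        (A.map (ρ K)).eval (∑ i ∈ s, α i) = 0 := by
  classical
  set l : AlgClos K := ρ K P.leadingCoeff with hl
  have hP0 : P ≠ 0 := fun h => by rw [h] at hdy; simp at hdy; omega
  have hρinj : Function.Injective (ρ K) :=
    (algebraMap (RatFunc K) (AlgClos K)).injective.comp (IsFractionRing.injective (Polynomial K) (RatFunc K))
  have hl0 : l ≠ 0 := fun h => leadingCoeff_ne_zero.mpr hP0 (hρinj (by simpa using h))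
  have hAlg : algebraMap (Polynomial K) (AlgClos K) = ρ K :=
    (IsScalarTower.algebraMap_eq (Polynomial K) (RatFunc K) (AlgClos K)).symm ▸ rfl
  set S : Finset (Finset (Fin dy)) := Finset.powersetCard c (Finset.univ : Finset (Fin dy))
    with hS
  have hScard : S.card = D := by rw [hS, Finset.card_powersetCard, Finset.card_univ,
    Fintype.card_fin, hD]
  set Q : Polynomial (AlgClos K) := ∏ s ∈ S, (X - C (∑ i ∈ s, α i)) with hQ
  -- roots of P.map ρ
  have hα : ∀ i, (P.map (ρ K)).eval (α i) = 0 := by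
    intro i
    rw [hroots, eval_mul, eval_prod]
    exact mul_eq_zero_of_right _ (Finset.prod_eq_zero (Finset.mem_univ i) (by simp))
  have heval2 : ∀ i, Polynomial.eval₂ (ρ K) (α i) P = 0 := by
    intro i; rw [← eval_map]; exact hα i
  -- coefficients of Π (X - C (α i)) lie in ⊥
  have hcoef : ∀ j : ℕ, (∏ i : Fin dy, (X - C (α i))).coeff j ∈ (⊥ : Subalgebra (RatFunc K) (AlgClos K)) := by
    intro j
    have h1 : l * (∏ i : Fin dy, (X - C (α i))).coeff j = ρ K (P.coeff j) := by
      rw [← coeff_C_mul, ← hroots, coeff_map]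
    have h2 : (∏ i : Fin dy, (X - C (α i))).coeff j = ρ K (P.coeff j) / l :=
      (eq_div_iff hl0).mpr (by rw [mul_comm]; exact h1)
    rw [h2, Algebra.mem_bot]
    exact ⟨algebraMap (Polynomial K) (RatFunc K) (P.coeff j) / algebraMap (Polynomial K) (RatFunc K) P.leadingCoeff,
      by rw [map_div₀]; rfl⟩
  have hQbot : ∀ k, Q.coeff k ∈ (⊥ : Subalgebra (RatFunc K) (AlgClos K)) := fun k => pcs_coeff_mem_bot c α hcoef k
  -- degree of Q
  have hQdeg : Q.natDegree ≤ D := by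
    calc Q.natDegree ≤ ∑ s ∈ S, (X - C (∑ i ∈ s, α i)).natDegree :=
          Polynomial.natDegree_prod_le _ _
      _ ≤ ∑ _s ∈ S, 1 := Finset.sum_le_sum (f := fun s => (X - C (∑ i ∈ s, α i)).natDegree)
            (fun s _ => le_of_eq (natDegree_X_sub_C _))
      _ = D := by rw [Finset.sum_const, smul_eq_mul, mul_one, hScard]
  -- valuation subring at infinity
  obtain ⟨B, hBmem, hBdeg⟩ := pcs_exists_B (K := K)
  have hXne : (ρ K (X : Polynomial K)) ≠ 0 := fun h => X_ne_zero (hρinj (by simpa using h))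
  have htne : (ρ K (X : Polynomial K)) ^ dx ≠ 0 := pow_ne_zero _ hXne
  have hcdeg : ∀ j, (P.coeff j).natDegree ≤ dx := by
    intro j
    by_cases hj : j ∈ P.support
    · exact le_trans (Finset.le_sup (f := fun j => (P.coeff j).natDegree) hj) hdx
    · simp [Polynomial.notMem_support_iff.mp hj]
  have hlcdeg : P.leadingCoeff.natDegree ≤ dx := by
    rw [Polynomial.leadingCoeff]; exact hcdeg _
  -- dy = e + 1
  obtain ⟨e, rfl⟩ : ∃ e, dy = e + 1 := ⟨dy - 1, by omega⟩
  -- bounds for l * α i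
  have hαB : ∀ i, (l * α i) / (ρ K X) ^ dx ∈ B := by
    intro i
    apply pcs_root_bound B _ _ htne (e + 1)
      (fun j => ρ K (P.coeff j * P.leadingCoeff ^ (e - j)))
    · intro j hj
      rw [← pow_mul]
      apply hBmem
      calc (P.coeff j * P.leadingCoeff ^ (e - j)).natDegree
          ≤ (P.coeff j).natDegree + (P.leadingCoeff ^ (e - j)).natDegree :=
            Polynomial.natDegree_mul_le
        _ ≤ dx + (e - j) * dx := add_le_add (hcdeg j)
            (le_trans (Polynomial.natDegree_pow_le) (Nat.mul_le_mul_left _ hlcdeg))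
        _ ≤ dx * (e + 1 - j) := by
            rw [show e + 1 - j = (e - j) + 1 by omega, Nat.mul_succ, Nat.mul_comm dx (e - j)]
            omega
    · -- the monic equation for l * α i
      have hev : ∑ j ∈ Finset.range (e + 2), ρ K (P.coeff j) * (α i) ^ j = 0 := by
        have h := heval2 i
        rw [Polynomial.eval₂_eq_sum_range, hdy] at h
        exact h
      have hterm : ∀ j ∈ Finset.range (e + 1),
          ρ K (P.coeff j * P.leadingCoeff ^ (e - j)) * (l * α i) ^ j
            = l ^ e * (ρ K (P.coeff j) * α i ^ j) := by
        intro j hj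
        rw [Finset.mem_range] at hj
        rw [map_mul, map_pow]
        have hpow : l ^ (e - j) * l ^ j = l ^ e := by rw [← pow_add]; congr 1; omega
        linear_combination (ρ K (P.coeff j) * α i ^ j) * hpow
      rw [Finset.sum_congr rfl hterm, ← Finset.mul_sum]
      rw [show e + 2 = (e + 1) + 1 from rfl, Finset.sum_range_succ] at hev
      have hlc : ρ K (P.coeff (e + 1)) = l := by rw [hl, Polynomial.leadingCoeff, hdy]
      rw [hlc] at hev
      linear_combination (l ^ e) * hev
  -- integrality of l * α i
  have hintα : ∀ i, IsIntegral (Polynomial K) (l * α i) := by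
    intro i
    have h := (ρ K).isIntegralElem_leadingCoeff_mul (p := P) (x := α i) (heval2 i)
    show (algebraMap (Polynomial K) (AlgClos K)).IsIntegralElem (l * α i)
    rw [hAlg]
    exact h
  -- construct the coefficients
  have hexists : ∀ k, ∃ qk : Polynomial K,
      ρ K qk = l ^ D * Q.coeff k ∧ qk.natDegree ≤ dx * D := by
    intro k
    by_cases hk : k ≤ D
    case neg =>
      refine ⟨0, ?_, by simp⟩
      have h0 : Q.coeff k = 0 :=
        coeff_eq_zero_of_natDegree_lt (lt_of_le_of_lt hQdeg (by omega))
      simp [h0]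
    have hkS : k ≤ S.card := hScard ▸ hk
    have hvieta : Q.coeff k
        = ∑ T ∈ S.powersetCard (D - k), ∏ s ∈ T, (-(∑ i ∈ s, α i)) := by
      have h := Finset.prod_X_add_C_coeff S (fun s => -(∑ i ∈ s, α i)) hkS
      simp_rw [map_neg, ← sub_eq_add_neg] at h
      rw [hScard] at h
      exact h
    have hQk : l ^ D * Q.coeff k
        = ∑ T ∈ S.powersetCard (D - k), l ^ k * ∏ s ∈ T, (-(l * ∑ i ∈ s, α i)) := by
      rw [hvieta, Finset.mul_sum]
      refine Finset.sum_congr rfl fun T hT => ?_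
      have hTcard : T.card = D - k := (Finset.mem_powersetCard.mp hT).2
      have hprodT : ∏ s ∈ T, (-(l * ∑ i ∈ s, α i))
          = l ^ (D - k) * ∏ s ∈ T, (-(∑ i ∈ s, α i)) := by
        simp_rw [neg_mul_eq_mul_neg]
        rw [Finset.prod_mul_distrib, Finset.prod_const, hTcard]
      rw [hprodT, ← mul_assoc, ← pow_add, show k + (D - k) = D by omega]
    have hbot : l ^ D * Q.coeff k ∈ (⊥ : Subalgebra (RatFunc K) (AlgClos K)) := by
      refine mul_mem (pow_mem ?_ D) (hQbot k)
      rw [Algebra.mem_bot]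
      exact ⟨algebraMap (Polynomial K) (RatFunc K) P.leadingCoeff, rfl⟩
    rw [Algebra.mem_bot] at hbot
    obtain ⟨f, hf⟩ := hbot
    have hint : IsIntegral (Polynomial K) (l ^ D * Q.coeff k) := by
      have hmem : l ^ D * Q.coeff k ∈ integralClosure (Polynomial K) (AlgClos K) := by
        rw [hQk]
        refine Subalgebra.sum_mem _ fun T hT => Subalgebra.mul_mem _
          (Subalgebra.pow_mem _ ?_ _) (Subalgebra.prod_mem _ fun s hs =>
            Subalgebra.neg_mem _ ?_)
        · rw [hl, ← hAlg]
          exact isIntegral_algebraMap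
        · rw [Finset.mul_sum]
          exact Subalgebra.sum_mem _ fun i _ => hintα i
      exact hmem
    have hfint : IsIntegral (Polynomial K) f := by
      obtain ⟨p, hmonic, hp⟩ := hint
      refine ⟨p, hmonic, ?_⟩
      have h2 : algebraMap (RatFunc K) (AlgClos K)
          (Polynomial.eval₂ (algebraMap (Polynomial K) (RatFunc K)) f p) = 0 := by
        rw [Polynomial.hom_eval₂, hf,
          ← IsScalarTower.algebraMap_eq (Polynomial K) (RatFunc K) (AlgClos K)]
        exact hp
      exact (algebraMap (RatFunc K) (AlgClos K)).injective
        (h2.trans (map_zero (algebraMap (RatFunc K) (AlgClos K))).symm)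
    obtain ⟨qk, hqk⟩ := IsIntegrallyClosed.isIntegral_iff.mp hfint
    have hρq : ρ K qk = l ^ D * Q.coeff k := by
      have : ρ K qk = algebraMap (RatFunc K) (AlgClos K) f := by rw [← hqk]; rfl
      rw [this, hf]
    refine ⟨qk, hρq, ?_⟩
    apply hBdeg qk (dx * D)
    rw [hρq, hQk, Finset.sum_div]
    refine sum_mem fun T hT => ?_
    have hTcard : T.card = D - k := (Finset.mem_powersetCard.mp hT).2
    have hsplit : (l ^ k * ∏ s ∈ T, (-(l * ∑ i ∈ s, α i))) / (ρ K X) ^ (dx * D)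
        = (l / (ρ K X) ^ dx) ^ k * ∏ s ∈ T, ((-(l * ∑ i ∈ s, α i)) / (ρ K X) ^ dx) := by
      rw [Finset.prod_div_distrib, Finset.prod_const, hTcard, div_pow, div_mul_div_comm,
        ← pow_mul, ← pow_mul, ← pow_add, ← Nat.mul_add, Nat.add_sub_cancel' hk]
    rw [hsplit]
    refine mul_mem (pow_mem (hBmem P.leadingCoeff dx hlcdeg) k) (prod_mem fun s hs => ?_)
    rw [neg_div]
    refine neg_mem ?_
    rw [Finset.mul_sum, Finset.sum_div]
    exact sum_mem fun i _ => hαB i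
  choose q hq1 hq2 using hexists
  have hAc : ∀ j, (∑ k ∈ Finset.range (D + 1), C (q k) * X ^ k).coeff j
      = if j < D + 1 then q j else 0 := by
    intro j
    rw [Polynomial.finset_sum_coeff]
    simp only [Polynomial.coeff_C_mul, Polynomial.coeff_X_pow, mul_ite, mul_one, mul_zero]
    rw [Finset.sum_ite_eq (Finset.range (D + 1)) j q]
    simp [Finset.mem_range]
  have hmap : (∑ k ∈ Finset.range (D + 1), C (q k) * X ^ k).map (ρ K) = C l ^ D * Q := by
    rw [Polynomial.map_sum]
    simp_rw [Polynomial.map_mul, Polynomial.map_C, Polynomial.map_pow, Polynomial.map_X, hq1]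
    have hdeg' : (C l ^ D * Q).natDegree < D + 1 := by
      refine Nat.lt_succ_of_le (le_trans Polynomial.natDegree_mul_le ?_)
      rw [Polynomial.natDegree_pow, Polynomial.natDegree_C, Nat.mul_zero, Nat.zero_add]
      exact hQdeg
    conv_rhs => rw [Polynomial.as_sum_range' _ _ hdeg']
    refine Finset.sum_congr rfl fun k _ => ?_
    rw [← Polynomial.C_mul_X_pow_eq_monomial]
    congr 1
    rw [show (C l : Polynomial (AlgClos K)) ^ D = C (l ^ D) from by rw [map_pow],
      Polynomial.coeff_C_mul]
  refine ⟨∑ k ∈ Finset.range (D + 1), C (q k) * X ^ k, ?_, ?_, ?_, ?_⟩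
  · -- degX bound
    refine Finset.sup_le fun j hj => ?_
    rw [hAc j]
    split
    · exact hq2 j
    · simp
  · -- natDegree bound
    refine Polynomial.natDegree_le_iff_coeff_eq_zero.mpr fun N hN => ?_
    rw [hAc N, if_neg (by omega)]
  · exact hmap
  · intro s hs
    rw [hmap, eval_mul, eval_prod]
    refine mul_eq_zero_of_right _ (Finset.prod_eq_zero hs ?_)
    rw [eval_sub, eval_X, eval_C, sub_self]
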